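/- Let φ : 𝔻 → 𝔻 be a nonconstant holomorphic function and ψ : 𝔻 → ℂ holomorphic with |ψ(w)| ≤ 1 for all w ∈ 𝔻, such that φ(z) = z·ψ(φ(z)) for all z ∈ 𝔻. Then φ is injective. -/

import Mathlib

open Metric

theorem chu_equation_injective
    (φ ψ : ℂ → ℂ)
    (hφ : DifferentiableOn ℂ φ (ball (0 : ℂ) 1))
    (hψ : DifferentiableOn ℂ ψ (ball (0 : ℂ) 1))
    (hφmaps : ∀ z ∈ ball (0 : ℂ) 1, φ z ∈ ball (0 : ℂ) 1)
    (hψb : ∀ w ∈ ball (0 : ℂ) 1, ‖ψ w‖ ≤ 1)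
    (hnc : ¬ ∃ c : ℂ, ∀ z ∈ ball (0 : ℂ) 1, φ z = c)
    (hfe : ∀ z ∈ ball (0 : ℂ) 1, φ z = z * ψ (φ z)) :
    Set.InjOn φ (ball (0 : ℂ) 1) := by
  intro z₁ hz₁ z₂ hz₂ heq
  by_contra hne
  -- the common value is 0 and ψ 0 = 0
  have h1 := hfe z₁ hz₁
  have h2 := hfe z₂ hz₂
  have hψw : ψ (φ z₁) = 0 := by
    have : (z₁ - z₂) * ψ (φ z₁) = 0 := by
      rw [sub_mul]
      nth_rewrite 2 [heq]
      rw [← h1, ← h2, heq, sub_self]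
    rcases mul_eq_zero.1 this with h | h
    · exact absurd (sub_eq_zero.1 h) hne
    · exact h
  have hw0 : φ z₁ = 0 := by rw [h1, hψw, mul_zero]
  have hψ0 : ψ 0 = 0 := hw0 ▸ hψw
  -- Schwarz: |ψ w| ≤ |w| on the ball
  have schwarz : ∀ w ∈ ball (0 : ℂ) 1, ‖ψ w‖ ≤ ‖w‖ := by
    intro w hw
    refine le_of_forall_pos_le_add fun ε hε => ?_
    set R₂ : ℝ := 1 + ε / (‖w‖ + 1) with hR₂
    have habs : 0 ≤ ‖w‖ := norm_nonneg w
    have hden : (0:ℝ) < ‖w‖ + 1 := by linarith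
    have hR₂1 : 1 < R₂ := by
      have : 0 < ε / (‖w‖ + 1) := div_pos hε hden
      simp [hR₂]; linarith
    have hmaps : Set.MapsTo ψ (ball (0:ℂ) 1) (ball (ψ 0) R₂) := by
      intro x hx
      rw [hψ0, mem_ball_zero_iff]
      exact lt_of_le_of_lt (hψb x hx) hR₂1
    have := Complex.dist_le_div_mul_dist_of_mapsTo_ball hψ (hmaps.mono_right ball_subset_closedBall) hw
    rw [hψ0, dist_zero_right, dist_zero_right, div_one] at this
    calc ‖ψ w‖ ≤ R₂ * ‖w‖ := by simpa using this
      _ = ‖w‖ + (ε / (‖w‖ + 1)) * ‖w‖ := by ring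
      _ ≤ ‖w‖ + ε := by
          have : (ε / (‖w‖ + 1)) * ‖w‖ ≤ ε := by
            rw [div_mul_eq_mul_div, div_le_iff₀ hden]
            nlinarith
          linarith
  -- hence φ ≡ 0
  apply hnc
  refine ⟨0, fun z hz => ?_⟩
  have hz1 : ‖z‖ < 1 := mem_ball_zero_iff.1 hz
  have hb := schwarz (φ z) (hφmaps z hz)
  have : ‖φ z‖ ≤ ‖z‖ * ‖φ z‖ := by
    calc ‖φ z‖ = ‖z‖ * ‖ψ (φ z)‖ := by
          conv_lhs => rw [hfe z hz, norm_mul]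
      _ ≤ ‖z‖ * ‖φ z‖ :=
          mul_le_mul_of_nonneg_left hb (norm_nonneg z)
  have habs : ‖φ z‖ = 0 := by nlinarith [norm_nonneg (φ z)]
  exact norm_eq_zero.1 habs
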